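/- If a vector field u satisfies ∇_ξ u = T(ξ, u) for all vector fields ξ (equivalently £_u ξ = ∇_u ξ for all ξ), then the curvature operator equals the deviation operator on u: [R(u,v)]ξ = [£Γ(u,v)]ξ for all vector fields v, ξ, where [R(u,v)]ξ = ∇_u∇_v ξ − ∇_v∇_u ξ − ∇_{£_u v} ξ and [£Γ(u,v)]ξ = £_u∇_v ξ − ∇_v £_u ξ − ∇_{£_u v} ξ. -/
import Mathlib

/-- If ∇_ξ u = T(ξ,u) for all ξ (equivalently £_u ξ = ∇_u ξ), then the curvature
operator equals the deviation operator on u: [R(u,v)]ξ = [£Γ(u,v)]ξ. -/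
theorem stmt16 (VF : Type*) [AddCommGroup VF]
    (nabla lie T : VF → VF → VF)
    (hT : ∀ ξ η, T ξ η = nabla ξ η - nabla η ξ - lie ξ η)
    (hlie : ∀ ξ η, lie ξ η = - lie η ξ)
    (u : VF) (hu : ∀ ξ, nabla ξ u = T ξ u) :
    ∀ v ξ : VF,
      nabla u (nabla v ξ) - nabla v (nabla u ξ) - nabla (lie u v) ξ
        = lie u (nabla v ξ) - nabla v (lie u ξ) - nabla (lie u v) ξ := by
  have key : ∀ ξ, nabla u ξ = lie u ξ := by
    intro ξ
    have h := hu ξ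
    rw [hT] at h
    have h2 : nabla ξ u - (nabla u ξ + lie ξ u) = nabla ξ u := by
      rw [← sub_sub]; exact h.symm
    have h3 : nabla u ξ + lie ξ u = 0 := sub_eq_self.mp h2
    rw [eq_neg_of_add_eq_zero_left h3, ← hlie]
  intro v ξ
  rw [key (nabla v ξ), key ξ]
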